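/- In any LEI-model, the formula (Iφ ∧ Iψ) → I(φ ∨ ψ) is true at every world. -/

import Mathlib

/-- Three truth values of strong Kleene logic: `f` (0), `n` (∅), `t` (1). -/
inductive TV where
  | f : TV
  | n : TV
  | t : TV
deriving DecidableEq

/-- Kleene negation: swaps 1 and 0, fixes ∅. -/
def TV.neg : TV → TV
  | .t => .f
  | .n => .n
  | .f => .t

/-- Kleene conjunction: minimum under 0 < ∅ < 1. -/
def TV.and : TV → TV → TV
  | .t, b => b
  | .n, .t => .n
  | .n, b => b
  | .f, _ => .f

/-- Kleene disjunction: maximum under 0 < ∅ < 1. -/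
def TV.or : TV → TV → TV
  | .f, b => b
  | .n, .f => .n
  | .n, b => b
  | .t, _ => .t

/-- Two-valued implication: value 1 unless the antecedent is 1 and the consequent is not. -/
def TV.imp : TV → TV → TV
  | .t, .t => .t
  | .t, _ => .f
  | _, _ => .t

/-- Modal formulas of LEI: atoms, ¬, ∧, ∨, → and the ignorance operator I. -/
inductive MForm where
  | atom : ℕ → MForm
  | neg : MForm → MForm
  | conj : MForm → MForm → MForm
  | disj : MForm → MForm → MForm
  | impl : MForm → MForm → MForm
  | ig : MForm → MForm

/-- A LEI-model: a Kripke frame with a three-valued atomic valuation. -/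
structure LEIModel (W : Type) where
  R : W → W → Prop
  V : ℕ → W → TV

open Classical in
/-- Three-valued evaluation in a LEI-model: strong Kleene clauses for ¬, ∧, ∨,
two-valued implication, and `I φ` is `t` at `w` iff `φ` is `t` at `w` and `φ` is not `t`
at any accessible world distinct from `w`; otherwise `I φ` is `f`. -/
noncomputable def val {W : Type} (M : LEIModel W) : MForm → W → TV
  | .atom k, w => M.V k w
  | .neg φ, w => (val M φ w).neg
  | .conj φ ψ, w => (val M φ w).and (val M ψ w)
  | .disj φ ψ, w => (val M φ w).or (val M ψ w)
  | .impl φ ψ, w => (val M φ w).imp (val M ψ w)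
  | .ig φ, w =>
      if val M φ w = TV.t ∧ ∀ w', w' ≠ w → M.R w w' → val M φ w' ≠ TV.t then TV.t
      else TV.f

lemma or_eq_t {a b : TV} : a.or b = TV.t ↔ a = TV.t ∨ b = TV.t := by
  cases a <;> cases b <;> simp [TV.or]

/-- In any LEI-model, (Iφ ∧ Iψ) → I(φ ∨ ψ) is true at every world. -/
theorem stmt5 {W : Type} (M : LEIModel W) (φ ψ : MForm) (w : W) :
    val M (.impl (.conj (.ig φ) (.ig ψ)) (.ig (.disj φ ψ))) w = TV.t := by
  simp only [val]
  by_cases h1 : val M φ w = TV.t ∧ ∀ w', w' ≠ w → M.R w w' → val M φ w' ≠ TV.t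
  · by_cases h2 : val M ψ w = TV.t ∧ ∀ w', w' ≠ w → M.R w w' → val M ψ w' ≠ TV.t
    · rw [if_pos h1, if_pos h2]
      refine Eq.trans (congrArg (TV.imp _) (if_pos ?_)) ?_
      swap
      · rfl
      constructor
      · exact or_eq_t.mpr (Or.inl h1.1)
      · intro w' hne hR h
        
        rcases or_eq_t.mp h with h | h
        · exact h1.2 w' hne hR h
        · exact h2.2 w' hne hR h
    · rw [if_pos h1, if_neg h2]; rfl
  · rw [if_neg h1]; split <;> rfl
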